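/- If F, G are functions on (0,1) related by the continuity condition (2-b)G(x) = √(1-x²)F'(x) - (1-b)·x/√(1-x²)·F(x), with F(0)=0, and ∫₀¹ G(x)/(1-x²)^{b/2} dx = 0, then lim_{x→1⁻} F(x)(1-x²)^{(1-b)/2} = 0. -/

import Mathlib

open Real MeasureTheory Set Filter

theorem stmt_0 (b : ℝ) (hb : 0 < b) (hb2 : b ≠ 2) (F G : ℝ → ℝ)
    (hF : ContDiffOn ℝ 1 F (Ico 0 1)) (hF0 : F 0 = 0)
    (hG : ∀ x ∈ Ioo (0:ℝ) 1,
      (2 - b) * G x = Real.sqrt (1 - x^2) * deriv F x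
        - (1 - b) * x / Real.sqrt (1 - x^2) * F x)
    (hInt : IntegrableOn (fun x => G x / (1 - x^2) ^ (b/2)) (Ioo 0 1))
    (hZero : ∫ x in Ioo (0:ℝ) 1, G x / (1 - x^2) ^ (b/2) = 0) :
    Tendsto (fun x => F x * (1 - x^2) ^ ((1-b)/2)) (nhdsWithin 1 (Iio 1)) (nhds 0) := by
  set g : ℝ → ℝ := fun x => G x / (1 - x^2) ^ (b/2) with hg
  set c : ℝ := (1-b)/2 with hc
  -- derivative of H at interior points
  have hderiv : ∀ t ∈ Ioo (0:ℝ) 1,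
      HasDerivAt (fun x => F x * (1 - x^2) ^ c) ((2-b) * g t) t := by
    intro t ht
    have ht0 := ht.1
    have ht1 := ht.2
    have hu : (0:ℝ) < 1 - t^2 := by nlinarith
    have hFd : HasDerivAt F (deriv F t) t := by
      have h1 : Ico (0:ℝ) 1 ∈ nhds t :=
        mem_nhds_iff.2 ⟨Ioo 0 1, Ioo_subset_Ico_self, isOpen_Ioo, ht⟩
      exact ((hF.differentiableOn one_ne_zero t (Ioo_subset_Ico_self ht)).differentiableAt
        h1).hasDerivAt
    have hbase : HasDerivAt (fun x : ℝ => 1 - x^2) (-(2*t)) t := by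
      simpa using ((hasDerivAt_pow 2 t).const_sub 1)
    have hpow : HasDerivAt (fun x : ℝ => (1 - x^2) ^ c) (-(2*t) * c * (1-t^2)^(c-1)) t :=
      hbase.rpow_const (Or.inl (ne_of_gt hu))
    have hprod := hFd.mul hpow
    have hval : deriv F t * (1-t^2)^c + F t * (-(2*t) * c * (1-t^2)^(c-1)) = (2-b) * g t := by
      rw [hg]
      have h2 : (2-b) * (G t / (1 - t^2) ^ (b/2)) = ((2-b) * G t) / (1 - t^2) ^ (b/2) := by
        ring
      rw [h2, hG t ht, Real.sqrt_eq_rpow]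
      have hpne : (1 - t^2) ^ (b/2) ≠ 0 := (Real.rpow_pos_of_pos hu _).ne'
      rw [eq_div_iff hpne]
      have e1 : (1-t^2)^c * (1-t^2)^(b/2) = (1-t^2)^((1:ℝ)/2) := by
        rw [← Real.rpow_add hu]; congr 1; rw [hc]; ring
      have e2 : (1-t^2)^(c-1) * (1-t^2)^(b/2) = ((1-t^2)^((1:ℝ)/2))⁻¹ := by
        rw [← Real.rpow_add hu]
        have hce : c - 1 + b/2 = -((1:ℝ)/2) := by rw [hc]; ring
        rw [hce, Real.rpow_neg hu.le]
      have hsne : (1 - t^2) ^ ((1:ℝ)/2) ≠ 0 := (Real.rpow_pos_of_pos hu _).ne'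
      have expand : (deriv F t * (1-t^2)^c + F t * (-(2*t) * c * (1-t^2)^(c-1))) * (1-t^2)^(b/2)
          = deriv F t * ((1-t^2)^c * (1-t^2)^(b/2))
            + F t * (-(2*t) * c) * ((1-t^2)^(c-1) * (1-t^2)^(b/2)) := by ring
      rw [expand, e1, e2, hc]
      field_simp
      ring
    exact hval ▸ hprod
  -- FTC on [0, x] for x ∈ (0,1)
  have hFTC : ∀ x ∈ Ioo (0:ℝ) 1,
      F x * (1 - x^2) ^ c = (2-b) * ∫ t in (0:ℝ)..x, g t := by
    intro x hx
    have hx0 := hx.1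
    have hx1 := hx.2
    have hsub : Ioc (0:ℝ) x ⊆ Ioo 0 1 := fun t ht => ⟨ht.1, lt_of_le_of_lt ht.2 hx1⟩
    have hint : IntervalIntegrable (fun t => (2-b) * g t) volume 0 x := by
      rw [intervalIntegrable_iff_integrableOn_Ioc_of_le hx0.le]
      exact ((hInt.mono_set hsub).const_mul _)
    have hcont : ContinuousOn (fun x => F x * (1 - x^2) ^ c) (Icc 0 x) := by
      have hIcc : Icc (0:ℝ) x ⊆ Ico 0 1 := fun t ht => ⟨ht.1, lt_of_le_of_lt ht.2 hx1⟩
      refine (hF.continuousOn.mono hIcc).mul ?_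
      refine ContinuousOn.rpow_const (by fun_prop) ?_
      intro t ht
      left
      have := ht.1; have := ht.2
      nlinarith
    have := intervalIntegral.integral_eq_sub_of_hasDeriv_right_of_le hx0.le hcont
      (fun t ht => ((hderiv t ⟨ht.1, lt_trans ht.2 hx1⟩).hasDerivWithinAt)) hint
    rw [intervalIntegral.integral_const_mul] at this
    rw [this, hF0]
    norm_num
  -- the integral tends to 0
  have hcover : AECover (volume.restrict (Ioo (0:ℝ) 1)) (nhdsWithin 1 (Iio 1))
      (fun x => Ioc (0:ℝ) x) := by
    refine ⟨?_, fun x => measurableSet_Ioc⟩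
    rw [ae_restrict_iff' measurableSet_Ioo]
    filter_upwards with t ht
    have : Ioi t ∈ nhds (1:ℝ) := Ioi_mem_nhds ht.2
    filter_upwards [nhdsWithin_le_nhds this] with x hx
    exact ⟨ht.1, le_of_lt hx⟩
  have htend0 : Tendsto (fun x => ∫ t in Ioc (0:ℝ) x, g t ∂(volume.restrict (Ioo 0 1)))
      (nhdsWithin 1 (Iio 1)) (nhds 0) := by
    have := hcover.integral_tendsto_of_countably_generated hInt
    rwa [hZero] at this
  have htend : Tendsto (fun x => ∫ t in (0:ℝ)..x, g t) (nhdsWithin 1 (Iio 1)) (nhds 0) := by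
    refine htend0.congr' ?_
    have hIoo : Ioo (0:ℝ) 1 ∈ nhdsWithin (1:ℝ) (Iio 1) := by
      rw [mem_nhdsWithin]
      exact ⟨Ioi 0, isOpen_Ioi, by norm_num, fun t ht => ⟨ht.1, ht.2⟩⟩
    filter_upwards [hIoo] with x hx
    have hss : Ioc (0:ℝ) x ∩ Ioo 0 1 = Ioc 0 x :=
      inter_eq_left.2 (fun t ht => ⟨ht.1, lt_of_le_of_lt ht.2 hx.2⟩)
    rw [Measure.restrict_restrict measurableSet_Ioc, hss,
      intervalIntegral.integral_of_le hx.1.le]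
  have hfinal := (htend.const_mul (2-b))
  rw [mul_zero] at hfinal
  refine hfinal.congr' ?_
  have hIoo : Ioo (0:ℝ) 1 ∈ nhdsWithin (1:ℝ) (Iio 1) := by
    rw [mem_nhdsWithin]
    exact ⟨Ioi 0, isOpen_Ioi, by norm_num, fun t ht => ⟨ht.1, ht.2⟩⟩
  filter_upwards [hIoo] with x hx
  exact (hFTC x hx).symm
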